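/- arXiv:2310.07171 — 2 statements merged into one kernel-verified Lean document; each statement's English description precedes it below -/
import Mathlib

section
/- Let Z₁,...,Z_N be independent discrete random variables on a finite set 𝒵 with joint distribution P_{Z^ℐ} = ∏ᵢ P_{Zᵢ}, and let ℓ(h,z) be a loss bounded by b. Let α₁,...,α_N ≥ 0 with Σᵢ αᵢ = 1. Then the absolute difference between the joint self-information weighted risk 𝔼[Σᵢ αᵢ ℓ(h,Zᵢ)·log(1/P_{Z^ℐ}(Z₁,...,Z_N))] and the weighted sum of marginal self-information weighted risks Σᵢ αᵢ 𝔼[ℓ(h,Zᵢ)·log(1/P_{Zᵢ}(Zᵢ))] is at most b·H(Z^ℐ) − b·Σᵢ αᵢ H(Zᵢ), where H(Z^ℐ) = Σᵢ H(Zᵢ) is the joint entropy. -/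
open Finset

section helpers
variable {ι Z : Type*} [Fintype ι] [DecidableEq ι] [Fintype Z]

lemma pisum (g : ι → Z → ℝ) :
    ∑ z : ι → Z, ∏ i, g i (z i) = ∏ i, ∑ x, g i x := by
  rw [Finset.prod_univ_sum, Fintype.piFinset_univ]

lemma onecoord (p : ι → Z → ℝ) (hpsum : ∀ i, ∑ z, p i z = 1) (j : ι) (f : Z → ℝ) :
    ∑ z : ι → Z, (∏ i, p i (z i)) * f (z j) = ∑ x, p j x * f x := by
  have h1 : ∀ z : ι → Z, (∏ i, p i (z i)) * f (z j)
      = ∏ i, (p i (z i) * if i = j then f (z i) else 1) := by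
    intro z
    rw [Finset.prod_mul_distrib, Finset.prod_ite_eq' Finset.univ j (fun i => f (z i))]
    simp
  simp_rw [h1]
  calc ∑ z : ι → Z, ∏ i, (p i (z i) * if i = j then f (z i) else 1)
      = ∏ i, ∑ x, (p i x * if i = j then f x else 1) :=
        pisum (fun i x => p i x * if i = j then f x else 1)
    _ = ∑ x, p j x * f x := by
        rw [Finset.prod_eq_single j]
        · simp
        · intro i _ hij
          simp [hij, hpsum i]
        · simp

lemma twocoord (p : ι → Z → ℝ) (hpsum : ∀ i, ∑ z, p i z = 1) (i j : ι) (hij : i ≠ j)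
    (f g : Z → ℝ) :
    ∑ z : ι → Z, (∏ k, p k (z k)) * f (z i) * g (z j)
    = (∑ x, p i x * f x) * (∑ x, p j x * g x) := by
  have h1 : ∀ z : ι → Z, (∏ k, p k (z k)) * f (z i) * g (z j)
      = ∏ k, (p k (z k) * (if k = i then f (z k) else 1) * (if k = j then g (z k) else 1)) := by
    intro z
    rw [Finset.prod_mul_distrib, Finset.prod_mul_distrib,
      Finset.prod_ite_eq' Finset.univ i (fun k => f (z k)),
      Finset.prod_ite_eq' Finset.univ j (fun k => g (z k))]
    simp
  simp_rw [h1]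
  calc ∑ z : ι → Z, ∏ k, (p k (z k) * (if k = i then f (z k) else 1)
          * (if k = j then g (z k) else 1))
      = ∏ k, ∑ x, (p k x * (if k = i then f x else 1) * (if k = j then g x else 1)) :=
        pisum (fun k x => p k x * (if k = i then f x else 1) * (if k = j then g x else 1))
    _ = (∑ x, p i x * f x) * (∑ x, p j x * g x) := by
        rw [← Finset.mul_prod_erase Finset.univ _ (Finset.mem_univ i),
          ← Finset.mul_prod_erase (Finset.univ.erase i) _
            (Finset.mem_erase.2 ⟨hij.symm, Finset.mem_univ j⟩)]
        have h2 : ∏ k ∈ (Finset.univ.erase i).erase j,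
            (∑ x, p k x * (if k = i then f x else 1) * (if k = j then g x else 1)) = 1 := by
          apply Finset.prod_eq_one
          intro k hk
          simp only [Finset.mem_erase, Finset.mem_univ] at hk
          simp [hk.1, hk.2.1, hpsum k]
        rw [h2, mul_one]
        simp [if_neg hij, if_neg hij.symm]

end helpers

/-- Participation-type gap between the joint self-information weighted risk and the
weighted marginal self-information weighted risks, for independent sources. -/
theorem stmt_1 {ι Z : Type*} [Fintype ι] [DecidableEq ι] [Fintype Z]
    (p : ι → Z → ℝ) (hp : ∀ i z, 0 ≤ p i z) (hpsum : ∀ i, ∑ z, p i z = 1)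
    (ℓ : Z → ℝ) (b : ℝ) (hl0 : ∀ z, 0 ≤ ℓ z) (hlb : ∀ z, ℓ z ≤ b)
    (α : ι → ℝ) (hα : ∀ i, 0 ≤ α i) (hαsum : ∑ i, α i = 1) :
    |(∑ z : ι → Z, (∏ i, p i (z i)) * (∑ i, α i * ℓ (z i)) *
        Real.log (1 / ∏ i, p i (z i)))
      - ∑ i, α i * ∑ zi, p i zi * ℓ zi * Real.log (1 / p i zi)|
    ≤ b * (∑ z : ι → Z, (∏ i, p i (z i)) * Real.log (1 / ∏ i, p i (z i)))
      - b * ∑ i, α i * ∑ zi, p i zi * Real.log (1 / p i zi) := by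
  classical
  rcases isEmpty_or_nonempty ι with hι | hι
  · simp [Finset.univ_eq_empty]
  have hZ : Nonempty Z := by
    by_contra h
    have := hpsum (Classical.arbitrary ι)
    rw [not_nonempty_iff] at h
    simp [Finset.univ_eq_empty] at this
  obtain ⟨x0⟩ := hZ
  have hb : 0 ≤ b := le_trans (hl0 x0) (hlb x0)
  set H : ι → ℝ := fun j => ∑ x, p j x * Real.log (1 / p j x) with hH
  set R : ι → ℝ := fun i => ∑ x, p i x * ℓ x * Real.log (1 / p i x) with hR
  set L : ι → ℝ := fun i => ∑ x, p i x * ℓ x with hL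
  -- pointwise log expansion
  have hlog : ∀ z : ι → Z, (∏ i, p i (z i)) * Real.log (1 / ∏ i, p i (z i))
      = ∑ j, (∏ i, p i (z i)) * Real.log (1 / p j (z j)) := by
    intro z
    by_cases hz : ∀ i, p i (z i) ≠ 0
    · have hlp : Real.log (∏ i, p i (z i)) = ∑ i, Real.log (p i (z i)) :=
        Real.log_prod (fun i _ => hz i)
      simp_rw [one_div, Real.log_inv]
      rw [hlp, ← Finset.sum_neg_distrib, Finset.mul_sum]
    · push_neg at hz
      obtain ⟨i, hi⟩ := hz
      have hP : ∏ i, p i (z i) = 0 := Finset.prod_eq_zero (Finset.mem_univ i) hi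
      simp [hP]
  -- joint entropy
  have hent : ∑ z : ι → Z, (∏ i, p i (z i)) * Real.log (1 / ∏ i, p i (z i)) = ∑ j, H j := by
    simp_rw [hlog]
    rw [Finset.sum_comm]
    exact Finset.sum_congr rfl fun j _ => onecoord p hpsum j fun x => Real.log (1 / p j x)
  -- joint weighted risk
  have hrisk : ∑ z : ι → Z, (∏ i, p i (z i)) * (∑ i, α i * ℓ (z i)) *
      Real.log (1 / ∏ i, p i (z i))
      = ∑ i, α i * (R i + L i * ((∑ j, H j) - H i)) := by
    have step1 : ∀ z : ι → Z, (∏ i, p i (z i)) * (∑ i, α i * ℓ (z i)) *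
        Real.log (1 / ∏ i, p i (z i))
        = ∑ i, ∑ j, α i * ((∏ k, p k (z k)) * ℓ (z i) * Real.log (1 / p j (z j))) := by
      intro z
      have e1 : (∏ i, p i (z i)) * (∑ i, α i * ℓ (z i)) * Real.log (1 / ∏ i, p i (z i))
          = (∑ j, (∏ i, p i (z i)) * Real.log (1 / p j (z j))) * (∑ i, α i * ℓ (z i)) := by
        rw [← hlog z]; ring
      rw [e1, Finset.sum_mul_sum, Finset.sum_comm]
      exact Finset.sum_congr rfl fun i _ => Finset.sum_congr rfl fun j _ => by ring
    simp_rw [step1]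
    rw [Finset.sum_comm]
    refine Finset.sum_congr rfl fun i _ => ?_
    rw [Finset.sum_comm]
    simp_rw [← Finset.mul_sum]
    congr 1
    rw [← Finset.sum_erase_add _ _ (Finset.mem_univ i)]
    have hdiag : ∑ z : ι → Z, (∏ k, p k (z k)) * ℓ (z i) * Real.log (1 / p i (z i))
        = R i := by
      simp_rw [mul_assoc]
      rw [onecoord p hpsum i fun x => ℓ x * Real.log (1 / p i x)]
      simp_rw [hR, ← mul_assoc]
    have hoff : ∀ j ∈ Finset.univ.erase i,
        ∑ z : ι → Z, (∏ k, p k (z k)) * ℓ (z i) * Real.log (1 / p j (z j))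
        = L i * H j := by
      intro j hj
      have hij : i ≠ j := fun h => (Finset.mem_erase.1 hj).1 h.symm
      exact twocoord p hpsum i j hij ℓ fun x => Real.log (1 / p j x)
    rw [Finset.sum_congr rfl hoff, hdiag, ← Finset.mul_sum,
      Finset.sum_erase_eq_sub (Finset.mem_univ i)]
    ring
  rw [hrisk, hent]
  have eR : (∑ i, α i * ∑ zi, p i zi * ℓ zi * Real.log (1 / p i zi)) = ∑ i, α i * R i := rfl
  have eH : (∑ i, α i * ∑ zi, p i zi * Real.log (1 / p i zi)) = ∑ i, α i * H i := rfl
  rw [eR, eH]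
  set S : ℝ := ∑ j, H j with hS
  -- basic facts
  have hp1 : ∀ i x, p i x ≤ 1 := fun i x =>
    (hpsum i) ▸ Finset.single_le_sum (fun y _ => hp i y) (Finset.mem_univ x)
  have hH0 : ∀ j, 0 ≤ H j := by
    intro j
    apply Finset.sum_nonneg
    intro x _
    rcases eq_or_lt_of_le (hp j x) with h | h
    · simp [← h]
    · exact mul_nonneg (hp j x) (Real.log_nonneg (one_le_one_div h (hp1 j x)))
  have hgap : ∀ i, 0 ≤ S - H i := by
    intro i
    have h1 : (0:ℝ) ≤ ∑ j ∈ Finset.univ.erase i, H j :=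
      Finset.sum_nonneg fun j _ => hH0 j
    rwa [Finset.sum_erase_eq_sub (Finset.mem_univ i)] at h1
  have hL0 : ∀ i, 0 ≤ L i := fun i =>
    Finset.sum_nonneg fun x _ => mul_nonneg (hp i x) (hl0 x)
  have hLb : ∀ i, L i ≤ b := by
    intro i
    calc L i ≤ ∑ x, p i x * b :=
          Finset.sum_le_sum fun x _ => mul_le_mul_of_nonneg_left (hlb x) (hp i x)
      _ = b := by rw [← Finset.sum_mul, hpsum i, one_mul]
  have key : (∑ i, α i * (R i + L i * (S - H i))) - ∑ i, α i * R i
      = ∑ i, α i * (L i * (S - H i)) := by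
    rw [← Finset.sum_sub_distrib]
    exact Finset.sum_congr rfl fun i _ => by ring
  rw [key]
  have habs : 0 ≤ ∑ i, α i * (L i * (S - H i)) :=
    Finset.sum_nonneg fun i _ =>
      mul_nonneg (hα i) (mul_nonneg (hL0 i) (hgap i))
  rw [abs_of_nonneg habs]
  have hrhs : b * S - b * ∑ i, α i * H i = ∑ i, α i * (b * (S - H i)) := by
    have h2 : ∑ i, α i * (b * (S - H i)) = (∑ i, α i) * (b * S) - b * ∑ i, α i * H i := by
      simp only [mul_sub]
      rw [Finset.sum_sub_distrib, ← Finset.sum_mul]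
      congr 1
      rw [Finset.mul_sum]
      exact Finset.sum_congr rfl fun i _ => by ring
    rw [h2, hαsum, one_mul]
  rw [hrhs]
  refine Finset.sum_le_sum fun i _ => ?_
  exact mul_le_mul_of_nonneg_left
    (mul_le_mul_of_nonneg_right (hLb i) (hgap i)) (hα i)
end

section
/- Let {Zᵢ}_{i∈ℐ_p} be mutually independent discrete random variables on a finite set 𝒵, let ℓ(h,·) be bounded by b, and let α be a probability vector over ℐ_p. Then the 'distributed learning discrepancy' satisfies |Σ_{z∈𝒵^{ℐ_p}} P_{Z^{ℐ_p}}(z)·Σ_{i∈ℐ_p} αᵢ·ℓ(h,zᵢ)·log(1/P_{Z^{ℐ_p}}(z)) − Σ_{i∈ℐ_p} αᵢ·Σ_{zᵢ∈𝒵} P_{Zᵢ}(zᵢ)·ℓ(h,zᵢ)·log(1/P_{Zᵢ}(zᵢ))| ≤ b·H(Z^{ℐ_p}) − b·Σ_{i∈ℐ_p} αᵢ·H(Zᵢ). -/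
open Finset

lemma aux_log_split {ι Z : Type*} [Fintype ι] [Fintype Z] (p : ι → Z → ℝ) (z : ι → Z) :
    (∏ i, p i (z i)) * Real.log (1 / ∏ i, p i (z i))
      = (∏ i, p i (z i)) * ∑ j, Real.log (1 / p j (z j)) := by
  by_cases h : (∏ i, p i (z i)) = 0
  · simp [h]
  · congr 1
    simp only [one_div, Real.log_inv]
    rw [Real.log_prod (fun i _ => Finset.prod_ne_zero_iff.mp h i (mem_univ i)),
      Finset.sum_neg_distrib]

lemma aux_sum_prod {ι Z : Type*} [Fintype ι] [DecidableEq ι] [Fintype Z] (g : ι → Z → ℝ) :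
    ∑ z : ι → Z, ∏ i, g i (z i) = ∏ i, ∑ z, g i z := by
  rw [Finset.prod_univ_sum, Fintype.piFinset_univ]

lemma aux_sum_prod_weight {ι Z : Type*} [Fintype ι] [DecidableEq ι] [Fintype Z] (p f : ι → Z → ℝ) :
    ∑ z : ι → Z, (∏ i, p i (z i)) * ∏ i, f i (z i) = ∏ i, ∑ z, p i z * f i z := by
  rw [← aux_sum_prod]
  exact Finset.sum_congr rfl fun z _ => (Finset.prod_mul_distrib).symm

lemma aux_single {ι Z : Type*} [Fintype ι] [DecidableEq ι] [Fintype Z] (p : ι → Z → ℝ)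
    (hpsum : ∀ i, ∑ z, p i z = 1) (i : ι) (A : Z → ℝ) :
    ∑ z : ι → Z, (∏ k, p k (z k)) * A (z i) = ∑ zi, p i zi * A zi := by
  have h1 : ∀ z : ι → Z, (∏ k, p k (z k)) * A (z i)
      = (∏ k, p k (z k)) * ∏ k, (if k = i then A (z k) else 1) := by
    intro z; simp [Finset.prod_ite_eq']
  rw [Finset.sum_congr rfl fun z _ => h1 z, aux_sum_prod_weight p (fun k z => if k = i then A z else 1)]
  rw [Finset.prod_eq_single i (fun k _ hk => by simp [hk, hpsum k]) (by simp)]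
  simp

lemma aux_pair {ι Z : Type*} [Fintype ι] [DecidableEq ι] [Fintype Z] (p : ι → Z → ℝ)
    (hpsum : ∀ i, ∑ z, p i z = 1) (i j : ι) (hij : i ≠ j) (A B : Z → ℝ) :
    ∑ z : ι → Z, (∏ k, p k (z k)) * (A (z i) * B (z j))
      = (∑ zi, p i zi * A zi) * (∑ zj, p j zj * B zj) := by
  have h1 : ∀ z : ι → Z, (∏ k, p k (z k)) * (A (z i) * B (z j))
      = (∏ k, p k (z k)) * ∏ k, ((if k = i then A (z k) else 1) * (if k = j then B (z k) else 1)) := by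
    intro z
    rw [Finset.prod_mul_distrib]
    simp [Finset.prod_ite_eq']
  rw [Finset.sum_congr rfl fun z _ => h1 z, aux_sum_prod_weight p (fun k z => (if k = i then A z else 1) * (if k = j then B z else 1))]
  rw [← Finset.mul_prod_erase univ _ (mem_univ i),
    ← Finset.mul_prod_erase _ _ (Finset.mem_erase.mpr ⟨hij.symm, mem_univ j⟩)]
  have h2 : ∀ k ∈ (univ.erase i).erase j, (∑ z, p k z * ((if k = i then A z else 1) * (if k = j then B z else 1))) = 1 := by
    intro k hk
    have hki : k ≠ i := Finset.ne_of_mem_erase (Finset.mem_of_mem_erase hk)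
    have hkj : k ≠ j := Finset.ne_of_mem_erase hk
    simp [hki, hkj, hpsum k]
  rw [Finset.prod_eq_one h2]
  simp [hij, hij.symm, mul_assoc]


/-- Distributed learning discrepancy: the gap between the joint self-information weighted
risk and the weighted marginal self-information weighted risks for independent
participating sources. -/
theorem stmt_7 {ι Z : Type*} [Fintype ι] [DecidableEq ι] [Fintype Z]
    (p : ι → Z → ℝ) (hp : ∀ i z, 0 ≤ p i z) (hpsum : ∀ i, ∑ z, p i z = 1)
    (ℓ : Z → ℝ) (b : ℝ) (hl0 : ∀ z, 0 ≤ ℓ z) (hlb : ∀ z, ℓ z ≤ b)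
    (α : ι → ℝ) (hα : ∀ i, 0 ≤ α i) (hαsum : ∑ i, α i = 1) :
    |(∑ z : ι → Z, (∏ i, p i (z i)) * (∑ i, α i * ℓ (z i)) *
        Real.log (1 / ∏ i, p i (z i)))
      - ∑ i, α i * ∑ zi, p i zi * ℓ zi * Real.log (1 / p i zi)|
    ≤ b * (∑ z : ι → Z, (∏ i, p i (z i)) * Real.log (1 / ∏ i, p i (z i)))
      - b * ∑ i, α i * ∑ zi, p i zi * Real.log (1 / p i zi) := by
  set S : ι → ℝ := fun j => ∑ z, p j z * Real.log (1 / p j z) with hSdef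
  set L : ι → ℝ := fun i => ∑ z, p i z * ℓ z with hLdef
  set Q : ι → ℝ := fun i => ∑ z, p i z * ℓ z * Real.log (1 / p i z) with hQdef
  -- basic bounds
  have hple : ∀ i z, p i z ≤ 1 := fun i z =>
    (hpsum i) ▸ Finset.single_le_sum (fun z' _ => hp i z') (mem_univ z)
  have hSnn : ∀ j, 0 ≤ S j := by
    intro j
    apply Finset.sum_nonneg
    intro z _
    rcases eq_or_lt_of_le (hp j z) with h | h
    · simp [← h]
    · exact mul_nonneg h.le (Real.log_nonneg (one_le_one_div h (hple j z)))
  have hLnn : ∀ i, 0 ≤ L i := fun i =>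
    Finset.sum_nonneg fun z _ => mul_nonneg (hp i z) (hl0 z)
  have hLb : ∀ i, L i ≤ b := by
    intro i
    calc L i ≤ ∑ z, p i z * b :=
          Finset.sum_le_sum fun z _ => mul_le_mul_of_nonneg_left (hlb z) (hp i z)
      _ = b := by rw [← Finset.sum_mul, hpsum i, one_mul]
  -- entropy identity
  have hEnt : (∑ z : ι → Z, (∏ i, p i (z i)) * Real.log (1 / ∏ i, p i (z i))) = ∑ j, S j := by
    rw [Finset.sum_congr rfl fun z _ => aux_log_split p z]
    simp_rw [Finset.mul_sum]
    rw [Finset.sum_comm]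
    exact Finset.sum_congr rfl fun j _ => aux_single p hpsum j (fun zj => Real.log (1 / p j zj))
  -- joint risk identity
  have hQ' : ∀ i, (∑ zi, p i zi * (ℓ zi * Real.log (1 / p i zi))) = Q i := by
    intro i; exact Finset.sum_congr rfl fun z _ => by ring
  have hJoint : (∑ z : ι → Z, (∏ i, p i (z i)) * (∑ i, α i * ℓ (z i)) *
      Real.log (1 / ∏ i, p i (z i)))
      = ∑ i, α i * (Q i + L i * ((∑ j, S j) - S i)) := by
    have step1 : ∀ z : ι → Z, (∏ i, p i (z i)) * (∑ i, α i * ℓ (z i)) *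
        Real.log (1 / ∏ i, p i (z i))
        = ∑ i, ∑ j, α i * ((∏ k, p k (z k)) * (ℓ (z i) * Real.log (1 / p j (z j)))) := by
      intro z
      have : (∏ i, p i (z i)) * (∑ i, α i * ℓ (z i)) * Real.log (1 / ∏ i, p i (z i))
          = (∑ i, α i * ℓ (z i)) * ((∏ i, p i (z i)) * Real.log (1 / ∏ i, p i (z i))) := by ring
      rw [this, aux_log_split p z, Finset.sum_mul]
      refine Finset.sum_congr rfl fun i _ => ?_
      rw [Finset.mul_sum, Finset.mul_sum]
      exact Finset.sum_congr rfl fun j _ => by ring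
    rw [Finset.sum_congr rfl fun z _ => step1 z, Finset.sum_comm]
    refine Finset.sum_congr rfl fun i _ => ?_
    rw [Finset.sum_comm]
    have hT : ∀ j, (∑ z : ι → Z, (∏ k, p k (z k)) * (ℓ (z i) * Real.log (1 / p j (z j))))
        = if j = i then Q i else L i * S j := by
      intro j
      by_cases hij : j = i
      · subst hij
        rw [if_pos rfl, aux_single p hpsum j (fun x => ℓ x * Real.log (1 / p j x)), hQ']
      · rw [if_neg hij]
        exact aux_pair p hpsum i j (Ne.symm hij) ℓ (fun x => Real.log (1 / p j x))
    simp_rw [← Finset.mul_sum]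
    congr 1
    rw [Finset.sum_congr rfl fun j _ => hT j, ← Finset.add_sum_erase univ _ (mem_univ i),
      if_pos rfl]
    congr 1
    rw [Finset.sum_congr rfl fun j hj => if_neg (Finset.ne_of_mem_erase hj),
      ← Finset.mul_sum, Finset.sum_erase_eq_sub (mem_univ i)]
  -- final inequality
  have hdnn : ∀ i, 0 ≤ (∑ j, S j) - S i := by
    intro i
    rw [← Finset.sum_erase_eq_sub (mem_univ i)]
    exact Finset.sum_nonneg fun j _ => hSnn j
  have key : |(∑ i, α i * (Q i + L i * ((∑ j, S j) - S i))) - ∑ i, α i * Q i|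
      ≤ b * (∑ j, S j) - b * ∑ i, α i * S i := by
    have hsub : (∑ i, α i * (Q i + L i * ((∑ j, S j) - S i))) - ∑ i, α i * Q i
        = ∑ i, α i * (L i * ((∑ j, S j) - S i)) := by
      rw [← Finset.sum_sub_distrib]
      exact Finset.sum_congr rfl fun i _ => by ring
    rw [hsub, abs_of_nonneg (Finset.sum_nonneg fun i _ =>
      mul_nonneg (hα i) (mul_nonneg (hLnn i) (hdnn i)))]
    have hbound : ∑ i, α i * (L i * ((∑ j, S j) - S i))
        ≤ ∑ i, α i * (b * ((∑ j, S j) - S i)) :=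
      Finset.sum_le_sum fun i _ => mul_le_mul_of_nonneg_left
        (mul_le_mul_of_nonneg_right (hLb i) (hdnn i)) (hα i)
    refine hbound.trans (le_of_eq ?_)
    calc ∑ i, α i * (b * ((∑ j, S j) - S i))
        = ∑ i, (α i * (b * ∑ j, S j) - b * (α i * S i)) :=
          Finset.sum_congr rfl fun i _ => by ring
      _ = (∑ i, α i) * (b * ∑ j, S j) - b * ∑ i, α i * S i := by
          rw [Finset.sum_sub_distrib, ← Finset.sum_mul, ← Finset.mul_sum]
      _ = b * (∑ j, S j) - b * ∑ i, α i * S i := by rw [hαsum, one_mul]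
  rw [hJoint, hEnt]
  exact key
end
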